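/- There exists a family (G_n)_{n∈ℕ} of simple graphs, each admitting no proper colouring with finitely many colours (each G_n has infinite chromatic number), such that for every nonprincipal ultrafilter u on ℕ the ultraproduct graph ∏_u G_n is acyclic and hence has chromatic number at most 2. -/

import Mathlib

/-- The setoid on the dependent product identifying functions agreeing on a set in `u`. -/
def upSetoid (u : Ultrafilter ℕ) (V : ℕ → Type*) : Setoid (∀ n, V n) where
  r f g := {n | f n = g n} ∈ u
  iseqv := by
    refine ⟨fun f => ?_, fun {f g} h => ?_, fun {f g h} h1 h2 => ?_⟩
    · simp only [Set.setOf_true]; exact Filter.univ_mem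
    · have : {n | f n = g n} ⊆ {n | g n = f n} := fun n hn => hn.symm
      exact Filter.mem_of_superset h this
    · have : {n | f n = g n} ∩ {n | g n = h n} ⊆ {n | f n = h n} :=
        fun n hn => hn.1.trans hn.2
      exact Filter.mem_of_superset (Filter.inter_mem h1 h2) this

/-- The ultraproduct of a family of simple graphs over an ultrafilter on ℕ. -/
def upGraph (u : Ultrafilter ℕ) (V : ℕ → Type*) (G : ∀ n, SimpleGraph (V n)) :
    SimpleGraph (Quotient (upSetoid u V)) where
  Adj x y := Quotient.liftOn₂ x y (fun f g => {n | (G n).Adj (f n) (g n)} ∈ u)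
    (by
      intro f g f' g' hf hg
      have key : ∀ {a a' b b' : ∀ n, V n}, {n | a n = a' n} ∈ u → {n | b n = b' n} ∈ u →
          {n | (G n).Adj (a n) (b n)} ∈ u → {n | (G n).Adj (a' n) (b' n)} ∈ u := by
        intro a a' b b' ha hb hadj
        have : {n | a n = a' n} ∩ {n | b n = b' n} ∩ {n | (G n).Adj (a n) (b n)} ⊆
            {n | (G n).Adj (a' n) (b' n)} := by
          rintro n ⟨⟨h1, h2⟩, h3⟩
          simp only [Set.mem_setOf_eq] at *
          rw [← h1, ← h2]
          exact h3
        exact Filter.mem_of_superset (Filter.inter_mem (Filter.inter_mem ha hb) hadj) this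
      have hf' : {n | f' n = f n} ∈ u :=
        Filter.mem_of_superset hf fun n hn => hn.symm
      have hg' : {n | g' n = g n} ∈ u :=
        Filter.mem_of_superset hg fun n hn => hn.symm
      exact propext ⟨fun h => key hf hg h, fun h => key hf' hg' h⟩)
  symm := by
    constructor
    intro x y
    induction x using Quotient.ind with
    | _ f =>
    induction y using Quotient.ind with
    | _ g =>
    intro h
    have hsub : {n | (G n).Adj (f n) (g n)} ⊆ {n | (G n).Adj (g n) (f n)} :=
      fun n hn => (G n).symm.symm _ _ hn
    exact Filter.mem_of_superset h hsub
  loopless := by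
    constructor
    intro x
    induction x using Quotient.ind with
    | _ f =>
    intro h
    have hempty : ({n | (G n).Adj (f n) (f n)} : Set ℕ) = ∅ := by
      ext n
      simp only [Set.mem_setOf_eq, Set.mem_empty_iff_false, iff_false]
      exact fun hn => (G n).loopless.irrefl _ hn
    have h' : {n | (G n).Adj (f n) (f n)} ∈ u := h
    rw [hempty] at h'
    exact Filter.empty_notMem (u : Filter ℕ) h'


open Finset

section Counting
variable {S : Type*} [Fintype S] [DecidableEq S] {t : ℕ}

lemma count_pi (σ : S → Finset (Fin t)) :
    (univ.filter fun ω : S → Fin t => ∀ s, ω s ∈ σ s).card = ∏ s, (σ s).card := by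
  rw [← Fintype.card_piFinset]
  congr 1
  ext ω
  simp [Fintype.mem_piFinset]

lemma count_eq (z : Fin t) (A : Finset (S)) :
    (univ.filter fun ω : S → Fin t => ∀ s ∈ A, ω s = z).card
      = t ^ (Fintype.card S - A.card) := by
  have h := count_pi (fun s : S => if s ∈ A then ({z} : Finset (Fin t)) else univ)
  have he : (univ.filter fun ω : S → Fin t => ∀ s ∈ A, ω s = z)
      = (univ.filter fun ω : S → Fin t =>
        ∀ s, ω s ∈ (if s ∈ A then ({z} : Finset (Fin t)) else univ)) := by
    ext ω
    simp only [mem_filter, mem_univ, true_and]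
    constructor
    · intro hh s; by_cases hs : s ∈ A <;> simp [hs, hh]
    · intro hh s hs; have := hh s; simpa [hs] using this
  rw [he, h]
  have : ∀ s : S, (if s ∈ A then ({z} : Finset (Fin t)) else univ).card
      = if s ∈ A then 1 else t := by
    intro s; by_cases hs : s ∈ A <;> simp [hs]
  simp_rw [this]
  rw [Finset.prod_ite]
  have h1 : (univ.filter fun s : S => s ∈ A) = A := by ext s; simp
  have h2 : (univ.filter fun s : S => ¬ s ∈ A) = Aᶜ := by ext s; simp
  simp [h1, h2, Finset.card_compl]

lemma count_ne (z : Fin t) (A : Finset (S)) :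
    (univ.filter fun ω : S → Fin t => ∀ s ∈ A, ω s ≠ z).card
      = (t-1) ^ A.card * t ^ (Fintype.card S - A.card) := by
  have h := count_pi (fun s : S => if s ∈ A then ({z}ᶜ : Finset (Fin t)) else univ)
  have he : (univ.filter fun ω : S → Fin t => ∀ s ∈ A, ω s ≠ z)
      = (univ.filter fun ω : S → Fin t =>
        ∀ s, ω s ∈ (if s ∈ A then ({z}ᶜ : Finset (Fin t)) else univ)) := by
    ext ω
    simp only [mem_filter, mem_univ, true_and]
    constructor
    · intro hh s; by_cases hs : s ∈ A <;> simp [hs, hh s]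
    · intro hh s hs; have := hh s; simpa [hs] using this
  rw [he, h]
  have : ∀ s : S, (if s ∈ A then ({z}ᶜ : Finset (Fin t)) else univ).card
      = if s ∈ A then t - 1 else t := by
    intro s; by_cases hs : s ∈ A <;> simp [hs, Finset.card_compl]
  simp_rw [this]
  rw [Finset.prod_ite]
  have h1 : (univ.filter fun s : S => s ∈ A) = A := by ext s; simp
  have h2 : (univ.filter fun s : S => ¬ s ∈ A) = Aᶜ := by ext s; simp
  simp [h1, h2, Finset.card_compl]

lemma sum_card_filter_comm {α β : Type*} [Fintype α] [Fintype β] (P : α → β → Prop)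
    [∀ a b, Decidable (P a b)] :
    ∑ a, (univ.filter fun b => P a b).card = ∑ b, (univ.filter fun a => P a b).card := by
  simp_rw [Finset.card_filter]
  exact Finset.sum_comm

lemma decay_mono {t c c0 E : ℕ} (h0 : c0 ≤ c) (hE : c ≤ E) :
    (t-1) ^ c * t ^ (E - c) ≤ (t-1) ^ c0 * t ^ (E - c0) := by
  have h1 : (t-1)^c = (t-1)^c0 * (t-1)^(c-c0) := by rw [← pow_add]; congr 1; omega
  have h2 : (t-1)^(c-c0) ≤ t^(c-c0) := Nat.pow_le_pow_left (by omega) _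
  calc (t-1)^c * t^(E-c) = (t-1)^c0 * ((t-1)^(c-c0) * t^(E-c)) := by rw [h1]; ring
    _ ≤ (t-1)^c0 * (t^(c-c0) * t^(E-c)) := by
        exact Nat.mul_le_mul_left _ (Nat.mul_le_mul_right _ h2)
    _ = (t-1)^c0 * t^(E-c0) := by rw [← pow_add]; congr 2; omega

lemma binom_two (a b n : ℕ) : a^n + n * a^(n-1) * b ≤ (a+b)^n := by
  induction n with
  | zero => simp
  | succ m ih =>
    cases m with
    | zero => simp [pow_succ]
    | succ l =>
      have h2 : (a+b)^(l+1+1) = (a+b) * (a+b)^(l+1) := by ring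
      have h3 : (a+b) * (a^(l+1) + (l+1) * a^(l+1-1) * b) ≤ (a+b)^(l+1+1) := by
        rw [h2]; exact Nat.mul_le_mul_left _ ih
      refine le_trans ?_ h3
      have e0 : l+1-1 = l := by omega
      have e1 : l+1+1-1 = l+1 := by omega
      rw [e0, e1]
      have hh1 : a^(l+1) = a^l * a := pow_succ a l
      have hh2 : a^(l+1+1) = a^l * a * a := by rw [← hh1]; exact pow_succ a (l+1)
      rw [hh1, hh2]
      nlinarith [Nat.zero_le ((l+1) * (a^l) * b * b), Nat.zero_le (a^l)]

lemma key_two_pow (t : ℕ) (ht : 1 ≤ t) : 2 * (t-1)^t ≤ t^t := by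
  have h := binom_two (t-1) 1 t
  have h1 : t - 1 + 1 = t := by omega
  rw [h1] at h
  have h2 : (t-1)^t = (t-1)^(t-1) * (t-1) := by
    rw [← pow_succ, h1]
  have h4 : (t-1)^t ≤ t * (t-1)^(t-1) := by
    rw [h2, mul_comm]; exact Nat.mul_le_mul_right _ (by omega)
  simp only [mul_one] at h
  calc 2*(t-1)^t = (t-1)^t + (t-1)^t := two_mul _
    _ ≤ (t-1)^t + t*(t-1)^(t-1) := Nat.add_le_add_left h4 _
    _ ≤ t^t := h

lemma choose_le_two_pow (n r : ℕ) : n.choose r ≤ 2 ^ n := by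
  rcases le_or_gt r n with h | h
  · calc n.choose r ≤ ∑ m ∈ range (n+1), n.choose m :=
        Finset.single_le_sum (fun i _ => Nat.zero_le _) (by simp; omega)
      _ = 2^n := Nat.sum_range_choose n
  · simp [Nat.choose_eq_zero_of_lt h]
open Finset

/-- next index, cyclically. -/
def fnxt {L : ℕ} (i : Fin L) : Fin L := ⟨(i.val + 1) % L, Nat.mod_lt _ i.pos⟩

/-- a combinatorial cycle of length `L` in a relation. -/
def IsTupCyc {V : Type*} (A : V → V → Prop) (L : ℕ) (c : ℕ → V) : Prop :=
  Set.InjOn c (Set.Iio L) ∧ (∀ i, i + 1 < L → A (c i) (c (i+1))) ∧ A (c (L-1)) (c 0)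

section Core
variable {N t : ℕ}

def cycPred {L : ℕ} (z : Fin t) (ω : Sym2 (Fin N) → Fin t) (c : Fin L → Fin N) : Prop :=
  Function.Injective c ∧ ∀ i : Fin L, ω s(c i, c (fnxt i)) = z

instance {L : ℕ} (z : Fin t) (ω : Sym2 (Fin N) → Fin t) :
    DecidablePred (cycPred (L := L) z ω) := fun c => by
  unfold cycPred; infer_instance

def indPred (a : ℕ) (z : Fin t) (ω : Sym2 (Fin N) → Fin t) (A : Finset (Fin N)) : Prop :=
  A.card = a ∧ ∀ i ∈ A, ∀ j ∈ A, i ≠ j → ω s(i, j) ≠ z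

instance (a : ℕ) (z : Fin t) (ω : Sym2 (Fin N) → Fin t) :
    DecidablePred (indPred a z ω) := fun A => by
  unfold indPred; infer_instance

def cycCount (g : ℕ) (z : Fin t) (ω : Sym2 (Fin N) → Fin t) : ℕ :=
  ∑ L ∈ Finset.Icc 3 g, (univ.filter fun c : Fin L → Fin N => cycPred z ω c).card

def indCount (a : ℕ) (z : Fin t) (ω : Sym2 (Fin N) → Fin t) : ℕ :=
  (univ.filter (indPred a z ω)).card

/-- the `L` slots of an injective cyclic tuple are pairwise distinct. -/
lemma slots_card {L : ℕ} (hL : 3 ≤ L) {c : Fin L → Fin N} (hc : Function.Injective c) :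
    ((univ : Finset (Fin L)).image (fun i => s(c i, c (fnxt i)))).card = L := by
  rw [Finset.card_image_of_injective _ ?_, card_univ, Fintype.card_fin]
  intro i j hij
  rw [Sym2.eq_iff] at hij
  rcases hij with ⟨h1, _⟩ | ⟨h1, h2⟩
  · exact hc h1
  · exfalso
    have e1 : i = fnxt j := hc h1
    have e2 : fnxt i = j := hc h2
    have v1 : i.val = (j.val + 1) % L := congrArg Fin.val e1
    have v2 : (i.val + 1) % L = j.val := congrArg Fin.val e2
    have hi := i.isLt
    have hj := j.isLt
    rcases Nat.lt_or_ge (j.val + 1) L with h | h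
    · rw [Nat.mod_eq_of_lt h] at v1
      rcases Nat.lt_or_ge (i.val + 1) L with h' | h'
      · rw [Nat.mod_eq_of_lt h'] at v2; omega
      · have : i.val + 1 = L := by omega
        rw [this, Nat.mod_self] at v2; omega
    · have : j.val + 1 = L := by omega
      rw [this, Nat.mod_self] at v1
      rcases Nat.lt_or_ge (i.val + 1) L with h' | h'
      · rw [Nat.mod_eq_of_lt h'] at v2; omega
      · have : i.val + 1 = L := by omega
        rw [this, Nat.mod_self] at v2; omega

lemma cyc_event_count {L : ℕ} (hL : 3 ≤ L) (z : Fin t) (c : Fin L → Fin N) :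
    (univ.filter fun ω : Sym2 (Fin N) → Fin t => cycPred z ω c).card
      ≤ t ^ (Fintype.card (Sym2 (Fin N)) - L) := by
  by_cases hc : Function.Injective c
  · set S := (univ : Finset (Fin L)).image (fun i => s(c i, c (fnxt i))) with hS
    have hsub : (univ.filter fun ω : Sym2 (Fin N) → Fin t => cycPred z ω c)
        ⊆ (univ.filter fun ω : Sym2 (Fin N) → Fin t => ∀ s ∈ S, ω s = z) := by
      intro ω hω
      rw [mem_filter] at hω ⊢
      refine ⟨mem_univ _, ?_⟩
      intro s hs
      rw [hS, Finset.mem_image] at hs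
      obtain ⟨i, _, rfl⟩ := hs
      exact hω.2.2 i
    calc _ ≤ (univ.filter fun ω : Sym2 (Fin N) → Fin t => ∀ s ∈ S, ω s = z).card :=
            Finset.card_le_card hsub
      _ = t ^ (Fintype.card (Sym2 (Fin N)) - S.card) := count_eq z S
      _ = t ^ (Fintype.card (Sym2 (Fin N)) - L) := by rw [slots_card hL hc]
  · have : (univ.filter fun ω : Sym2 (Fin N) → Fin t => cycPred z ω c) = ∅ := by
      ext ω; simp only [mem_filter, Finset.notMem_empty, iff_false]
      rintro ⟨-, h1, -⟩; exact hc h1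
    rw [this]; simp

lemma sum_cycCount_le (g : ℕ) (z : Fin t) (hg : g ≤ Fintype.card (Sym2 (Fin N))) :
    ∑ ω : Sym2 (Fin N) → Fin t, cycCount g z ω
      ≤ ∑ L ∈ Finset.Icc 3 g, N ^ L * t ^ (Fintype.card (Sym2 (Fin N)) - L) := by
  unfold cycCount
  rw [Finset.sum_comm]
  apply Finset.sum_le_sum
  intro L hL
  rw [Finset.mem_Icc] at hL
  have h3 : 3 ≤ L := hL.1
  rw [sum_card_filter_comm (fun ω (c : Fin L → Fin N) => cycPred z ω c)]
  calc ∑ c : Fin L → Fin N, (univ.filter fun ω : Sym2 (Fin N) → Fin t => cycPred z ω c).card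
      ≤ (univ : Finset (Fin L → Fin N)).card • t ^ (Fintype.card (Sym2 (Fin N)) - L) :=
        Finset.sum_le_card_nsmul _ _ _ (fun c _ => cyc_event_count h3 z c)
    _ = N ^ L * t ^ (Fintype.card (Sym2 (Fin N)) - L) := by
        rw [card_univ, Fintype.card_fun, Fintype.card_fin, Fintype.card_fin, smul_eq_mul]

lemma ind_event_count (a : ℕ) (ha : 1 ≤ a) (z : Fin t) (A : Finset (Fin N)) (T : ℕ)
    (hT : 2 * T ≤ a * (a - 1)) (hTE : T ≤ Fintype.card (Sym2 (Fin N))) :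
    (univ.filter fun ω : Sym2 (Fin N) → Fin t => indPred a z ω A).card
      ≤ (t-1) ^ T * t ^ (Fintype.card (Sym2 (Fin N)) - T) := by
  by_cases hcard : A.card = a
  · set S : Finset (Sym2 (Fin N)) := A.offDiag.image Sym2.mk.uncurry with hS
    have hsub : (univ.filter fun ω : Sym2 (Fin N) → Fin t => indPred a z ω A)
        ⊆ (univ.filter fun ω : Sym2 (Fin N) → Fin t => ∀ s ∈ S, ω s ≠ z) := by
      intro ω hω
      rw [mem_filter] at hω ⊢
      refine ⟨mem_univ _, ?_⟩
      intro s hs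
      rw [hS, Finset.mem_image] at hs
      obtain ⟨p, hp, rfl⟩ := hs
      rw [Finset.mem_offDiag] at hp
      exact hω.2.2 p.1 hp.1 p.2 hp.2.1 hp.2.2
    have hfib : A.offDiag.card ≤ 2 * S.card := by
      apply Finset.card_le_mul_card_image
      intro b hb
      rw [Finset.mem_image] at hb
      obtain ⟨p, _, rfl⟩ := hb
      have : A.offDiag.filter (fun q => Sym2.mk.uncurry q = Sym2.mk.uncurry p) ⊆ {p, p.swap} := by
        intro q hq
        rw [mem_filter] at hq
        rcases Sym2.mk_eq_mk_iff.1 hq.2 with h | h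
        · simp [h]
        · simp [h, Prod.swap_swap]
      calc (A.offDiag.filter (fun q => Sym2.mk.uncurry q = Sym2.mk.uncurry p)).card
          ≤ ({p, p.swap} : Finset ((Fin N) × (Fin N))).card := Finset.card_le_card this
        _ ≤ 2 := Finset.card_insert_le _ _ |>.trans (by simp)
    have hod : A.offDiag.card = a * (a - 1) := by
      rw [Finset.offDiag_card, hcard]
      cases a with
      | zero => simp
      | succ m => rw [Nat.succ_sub_one, Nat.mul_succ]; omega
    have hTS : T ≤ S.card := by omega
    have hSE : S.card ≤ Fintype.card (Sym2 (Fin N)) := Finset.card_le_univ S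
    calc _ ≤ (univ.filter fun ω : Sym2 (Fin N) → Fin t => ∀ s ∈ S, ω s ≠ z).card :=
          Finset.card_le_card hsub
      _ = (t-1) ^ S.card * t ^ (Fintype.card (Sym2 (Fin N)) - S.card) := count_ne z S
      _ ≤ (t-1) ^ T * t ^ (Fintype.card (Sym2 (Fin N)) - T) := decay_mono hTS hSE
  · have : (univ.filter fun ω : Sym2 (Fin N) → Fin t => indPred a z ω A) = ∅ := by
      ext ω; simp only [mem_filter, Finset.notMem_empty, iff_false]
      rintro ⟨-, h1, -⟩; exact hcard h1
    rw [this]; simp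

lemma sum_indCount_le (a : ℕ) (ha : 1 ≤ a) (z : Fin t) (T : ℕ)
    (hT : 2 * T ≤ a * (a - 1)) (hTE : T ≤ Fintype.card (Sym2 (Fin N))) :
    ∑ ω : Sym2 (Fin N) → Fin t, indCount a z ω
      ≤ 2 ^ N * ((t-1) ^ T * t ^ (Fintype.card (Sym2 (Fin N)) - T)) := by
  unfold indCount
  rw [sum_card_filter_comm (fun ω (A : Finset (Fin N)) => indPred a z ω A)]
  calc ∑ A : Finset (Fin N), (univ.filter fun ω : Sym2 (Fin N) → Fin t => indPred a z ω A).card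
      ≤ (univ : Finset (Finset (Fin N))).card •
          ((t-1) ^ T * t ^ (Fintype.card (Sym2 (Fin N)) - T)) :=
        Finset.sum_le_card_nsmul _ _ _ (fun A _ => ind_event_count a ha z A T hT hTE)
    _ ≤ 2 ^ N * ((t-1) ^ T * t ^ (Fintype.card (Sym2 (Fin N)) - T)) := by
        rw [smul_eq_mul]
        apply Nat.mul_le_mul_right
        rw [card_univ, Fintype.card_finset, Fintype.card_fin]

lemma exists_del (hN : 0 < N) (g : ℕ) (z : Fin t) (ω : Sym2 (Fin N) → Fin t) :
    ∃ D : Finset (Fin N),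
      D.card ≤ cycCount g z ω ∧
      ∀ L, 3 ≤ L → L ≤ g → ∀ c : Fin L → Fin N, cycPred z ω c →
        ∀ h : 0 < L, c ⟨0, h⟩ ∈ D := by
  classical
  refine ⟨(Finset.Icc 3 g).biUnion (fun L =>
    (univ.filter fun c : Fin L → Fin N => cycPred z ω c).image
      (fun c => if h : 0 < L then c ⟨0, h⟩ else ⟨0, hN⟩)), ?_, ?_⟩
  · refine le_trans Finset.card_biUnion_le (Finset.sum_le_sum ?_)
    exact fun L _ => Finset.card_image_le
  · intro L hL3 hLg c hc hpos
    rw [Finset.mem_biUnion]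
    refine ⟨L, Finset.mem_Icc.2 ⟨hL3, hLg⟩, ?_⟩
    rw [Finset.mem_image]
    exact ⟨c, Finset.mem_filter.2 ⟨mem_univ _, hc⟩, by rw [dif_pos hpos]⟩

end Core
open Finset

set_option maxHeartbeats 1000000 in
lemma erdos_main (g k M t N a : ℕ) (hg : 3 ≤ g) (hk : 1 ≤ k)
    (hM : M = 64 * k ^ 2) (ht : t = 8 * g * M ^ (g - 1)) (hN : N = t * M)
    (ha : 2 * k * a = N) :
    ∃ H : SimpleGraph (Fin N),
      (∀ L c, 3 ≤ L → L ≤ g → ¬ IsTupCyc H.Adj L c) ∧ ¬ H.Colorable k := by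
  classical
  -- numeric facts
  have hk2 : 1 ≤ k ^ 2 := Nat.one_le_pow _ _ (by omega)
  have hM64 : 64 ≤ M := by nlinarith
  have hMg1 : 1 ≤ M ^ (g - 1) := Nat.one_le_pow _ _ (by omega)
  have hMg : 1 ≤ M ^ g := Nat.one_le_pow _ _ (by omega)
  have ht2 : 2 ≤ t := by nlinarith
  have hN8 : N = 8 * (g * M ^ g) := by
    have hh : M ^ (g - 1) * M = M ^ g := by
      rw [← pow_succ]; congr 1; omega
    rw [hN, ht]
    calc 8 * g * M ^ (g-1) * M = 8 * (g * (M ^ (g-1) * M)) := by ring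
      _ = 8 * (g * M ^ g) := by rw [hh]
  have hNpos : 1 ≤ N := by nlinarith
  have hgN : g ≤ N := by nlinarith
  have hN128 : 2 * k * (64 * k) ≤ N := by
    calc 2*k*(64*k) = 2*(64*k^2) := by ring
      _ = 2*M := by rw [hM]
      _ ≤ t*M := Nat.mul_le_mul_right M ht2
      _ = N := hN.symm
  have h64k : 64 * k ≤ a := by
    refine Nat.le_of_mul_le_mul_left ?_ (show 0 < 2*k by omega)
    rw [ha]; exact hN128
  have ha2 : 2 ≤ a := by omega
  have haa : a * a = 16 * (t * N) := by
    have e1 : 16 * (N * N) = M * (a * a) := by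
      have hh : N * N = (2*k*a) * (2*k*a) := by rw [ha]
      rw [hh, hM]; ring
    have e2 : 16 * (N * N) = M * (16 * (t * N)) := by
      calc 16 * (N*N) = 16 * ((t*M) * N) := by rw [← hN]
        _ = M * (16*(t*N)) := by ring
    exact Nat.eq_of_mul_eq_mul_left (show 0 < M by omega) (e1.symm.trans e2)
  have h4a : a * a ≤ 4 * (a * (a-1)) := by
    obtain ⟨m, rfl⟩ : ∃ m, a = m + 2 := ⟨a - 2, by omega⟩
    have : m + 2 - 1 = m + 1 := by omega
    rw [this]; nlinarith
  have hkey2 : 2 * (t * (N+1)) ≤ a * (a - 1) := by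
    have htN : t ≤ t * N := Nat.le_mul_of_pos_right t (by omega)
    rw [mul_add, mul_one]
    linarith [haa, h4a, htN]
  set E := Fintype.card (Sym2 (Fin N)) with hE
  have hE2 : 2 * E = N * (N + 1) := by
    have h3 : (2 : ℕ) ∣ (N+1) * N := by
      have hh := Nat.even_mul_succ_self N
      rw [mul_comm] at hh
      exact hh.two_dvd
    have h1 : E = (N+1) * N / 2 := by
      rw [hE, Sym2.card, Fintype.card_fin, Nat.choose_two_right]
      congr 1
    rw [h1, Nat.mul_div_cancel' h3, mul_comm]
  have h2t : 2 * t ≤ N := by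
    calc 2*t = t*2 := by ring
      _ ≤ t*M := Nat.mul_le_mul_left t (by omega)
      _ = N := hN.symm
  have hTE : t * (N+1) ≤ E := by
    refine Nat.le_of_mul_le_mul_left ?_ (show 0 < 2 by omega)
    calc 2 * (t * (N+1)) = (2*t) * (N+1) := by ring
      _ ≤ N * (N+1) := Nat.mul_le_mul_right _ h2t
      _ = 2 * E := hE2.symm
  have hNE : N ≤ E := by
    have h1 : 2*N ≤ N*(N+1) := by nlinarith
    linarith [hE2]
  have hgE : g ≤ E := le_trans hgN hNE
  set z : Fin t := ⟨0, by omega⟩ with hz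
  -- existence of a good ω
  have hEx : ∃ ω : Sym2 (Fin N) → Fin t, 2 * cycCount g z ω < N ∧ indCount a z ω = 0 := by
    by_contra hcon
    push_neg at hcon
    have hlow : ∀ ω : Sym2 (Fin N) → Fin t,
        N ≤ 2 * cycCount g z ω + N * indCount a z ω := by
      intro ω
      rcases Nat.lt_or_ge (2 * cycCount g z ω) N with h | h
      · have h1 : indCount a z ω ≠ 0 := hcon ω h
        have h2 : 1 ≤ indCount a z ω := by omega
        calc N = N * 1 := (mul_one N).symm
          _ ≤ N * indCount a z ω := Nat.mul_le_mul_left N h2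
          _ ≤ _ := Nat.le_add_left _ _
      · omega
    have hsum : N * t ^ E ≤ 2 * (∑ ω : Sym2 (Fin N) → Fin t, cycCount g z ω)
        + N * (∑ ω : Sym2 (Fin N) → Fin t, indCount a z ω) := by
      have h1 : ∑ _ω : Sym2 (Fin N) → Fin t, N
          ≤ ∑ ω : Sym2 (Fin N) → Fin t, (2 * cycCount g z ω + N * indCount a z ω) :=
        Finset.sum_le_sum (fun ω _ => hlow ω)
      rw [Finset.sum_const, card_univ, Fintype.card_fun, Fintype.card_fin, smul_eq_mul,
        Finset.sum_add_distrib, ← Finset.mul_sum, ← Finset.mul_sum] at h1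
      rw [mul_comm (t ^ E) N] at h1
      exact h1
    have hb1 : 8 * (∑ ω : Sym2 (Fin N) → Fin t, cycCount g z ω) ≤ N * t ^ E := by
      have h1 := sum_cycCount_le (N := N) g z hgE
      have h2 : ∑ L ∈ Finset.Icc 3 g, N ^ L * t ^ (E - L)
          ≤ (g * M ^ g) * t ^ E := by
        have e : ∀ L ∈ Finset.Icc 3 g, N ^ L * t ^ (E - L) ≤ M ^ g * t ^ E := by
          intro L hL
          rw [Finset.mem_Icc] at hL
          have hLE : L ≤ E := le_trans hL.2 hgE
          have e1 : N ^ L = M ^ L * t ^ L := by rw [hN]; rw [mul_comm t M, mul_pow]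
          have e2 : t ^ L * t ^ (E - L) = t ^ E := by
            rw [← pow_add]; congr 1; omega
          calc N ^ L * t ^ (E-L) = M ^ L * (t ^ L * t ^ (E-L)) := by rw [e1]; ring
            _ = M ^ L * t ^ E := by rw [e2]
            _ ≤ M ^ g * t ^ E :=
              Nat.mul_le_mul_right _ (Nat.pow_le_pow_right (by omega) hL.2)
        calc ∑ L ∈ Finset.Icc 3 g, N ^ L * t ^ (E - L)
            ≤ (Finset.Icc 3 g).card • (M ^ g * t ^ E) :=
              Finset.sum_le_card_nsmul _ _ _ e
          _ = (Finset.Icc 3 g).card * (M ^ g * t ^ E) := smul_eq_mul ..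
          _ ≤ g * (M ^ g * t ^ E) := by
              refine Nat.mul_le_mul_right _ ?_
              rw [Nat.card_Icc]; omega
          _ = (g * M ^ g) * t ^ E := by ring
      calc 8 * (∑ ω : Sym2 (Fin N) → Fin t, cycCount g z ω)
          ≤ 8 * ((g * M ^ g) * t ^ E) := by
            exact Nat.mul_le_mul_left _ (le_trans h1 h2)
        _ = (8 * (g * M ^ g)) * t ^ E := by ring
        _ = N * t ^ E := by rw [← hN8]
    have hb2 : 2 * (N * (∑ ω : Sym2 (Fin N) → Fin t, indCount a z ω)) ≤ N * t ^ E := by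
      have h1 := sum_indCount_le (N := N) a (by omega) z (t*(N+1)) hkey2 hTE
      have hp : 2 * (2 ^ N * ((t-1) ^ (t*(N+1)) * t ^ (E - t*(N+1)))) ≤ t ^ E := by
        have hkp := key_two_pow t (by omega)
        have hp1 : (2 * (t-1)^t)^(N+1) ≤ (t^t)^(N+1) := Nat.pow_le_pow_left hkp _
        have hp2 : (2 * (t-1)^t)^(N+1) = 2^(N+1) * (t-1)^(t*(N+1)) := by
          rw [mul_pow, ← pow_mul]
        have hp3 : (t^t)^(N+1) = t^(t*(N+1)) := by rw [← pow_mul]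
        rw [hp2, hp3] at hp1
        calc 2 * (2 ^ N * ((t-1) ^ (t*(N+1)) * t ^ (E - t*(N+1))))
            = (2^(N+1) * (t-1)^(t*(N+1))) * t ^ (E - t*(N+1)) := by ring
          _ ≤ t^(t*(N+1)) * t ^ (E - t*(N+1)) := Nat.mul_le_mul_right _ hp1
          _ = t ^ E := by rw [← pow_add]; congr 1; omega
      calc 2 * (N * (∑ ω : Sym2 (Fin N) → Fin t, indCount a z ω))
          = N * (2 * (∑ ω : Sym2 (Fin N) → Fin t, indCount a z ω)) := by ring
        _ ≤ N * (2 * (2 ^ N * ((t-1) ^ (t*(N+1)) * t ^ (E - t*(N+1))))) := by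
            exact Nat.mul_le_mul_left _ (Nat.mul_le_mul_left _ h1)
        _ ≤ N * t ^ E := Nat.mul_le_mul_left _ hp
    have hpos : 0 < N * t ^ E :=
      Nat.mul_pos (by omega) (pow_pos (show 0 < t by omega) E)
    linarith [hsum, hb1, hb2, hpos]
  obtain ⟨ω, hcyc, hind⟩ := hEx
  obtain ⟨D, hDcard, hDmem⟩ := exists_del (N := N) (by omega) g z ω
  refine ⟨{ Adj := fun i j => i ∉ D ∧ j ∉ D ∧ i ≠ j ∧ ω s(i,j) = z
            symm := by
              constructor
              rintro i j ⟨h1, h2, h3, h4⟩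
              exact ⟨h2, h1, h3.symm, by rwa [Sym2.eq_swap]⟩
            loopless := by constructor; rintro i ⟨-, -, h3, -⟩; exact h3 rfl }, ?_, ?_⟩
  · -- no short cycles
    rintro L c hL3 hLg ⟨hinj, hadj, hwrap⟩
    have hLpos : 0 < L := by omega
    set c' : Fin L → Fin N := fun i => c i.val with hc'
    have hinj' : Function.Injective c' := by
      intro i j hij
      have := hinj (Set.mem_Iio.2 i.isLt) (Set.mem_Iio.2 j.isLt) hij
      exact Fin.ext this
    have hcp : cycPred z ω c' := by
      refine ⟨hinj', ?_⟩
      intro i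
      have hv : (fnxt i).val = (i.val + 1) % L := rfl
      rcases Nat.lt_or_ge (i.val + 1) L with h | h
      · have h5 := hadj i.val h
        have e : (fnxt i).val = i.val + 1 := by rw [hv, Nat.mod_eq_of_lt h]
        have : c' (fnxt i) = c (i.val + 1) := by rw [hc']; simp only []; rw [e]
        rw [hc']; simp only []
        rw [e]
        exact h5.2.2.2
      · have he : i.val = L - 1 := by have := i.isLt; omega
        have e : (fnxt i).val = 0 := by
          rw [hv, show i.val + 1 = L by have := i.isLt; omega, Nat.mod_self]
        have : c' i = c (L-1) := by rw [hc']; simp only []; rw [he]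
        rw [hc']; simp only []
        rw [he, e]
        exact hwrap.2.2.2
    have hmem : c 0 ∈ D := hDmem L hL3 hLg c' hcp hLpos
    exact (hadj 0 (by omega)).1 hmem
  · -- not k-colorable
    rintro ⟨C⟩
    have hDa : k * (a - 1) < Dᶜ.card := by
      have h1 : Dᶜ.card = N - D.card := by
        rw [Finset.card_compl, Fintype.card_fin]
      have h2 : 2 * D.card < N := by
        have := hDcard; omega
      obtain ⟨m, rfl⟩ : ∃ m, a = m + 2 := ⟨a - 2, by omega⟩
      have e1 : 2 * (k * (m + 2 - 1)) + 2 * k = N := by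
        have : 2 * (k * (m+1)) + 2 * k = 2 * k * (m + 2) := by ring
        rw [show m + 2 - 1 = m + 1 by omega, this, ha]
      have e2 : m + 2 - 1 = m + 1 := by omega
      rw [e2] at e1 ⊢
      omega
    have hmap : ∀ v ∈ Dᶜ, C v ∈ (univ : Finset (Fin k)) := fun v _ => mem_univ _
    obtain ⟨y, -, hy⟩ := Finset.exists_lt_card_fiber_of_mul_lt_card_of_maps_to hmap
      (by rw [card_univ, Fintype.card_fin]; exact hDa)
    obtain ⟨A, hA, hAcard⟩ := Finset.exists_subset_card_eq (show a ≤ _ by omega :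
      a ≤ (Dᶜ.filter fun v => C v = y).card)
    have hAind : indPred a z ω A := by
      refine ⟨hAcard, ?_⟩
      intro i hi j hj hij hz'
      have hi' := hA hi
      have hj' := hA hj
      rw [Finset.mem_filter, Finset.mem_compl] at hi' hj'
      have hadj : i ∉ D ∧ j ∉ D ∧ i ≠ j ∧ ω s(i,j) = z := ⟨hi'.1, hj'.1, hij, hz'⟩
      have := C.valid hadj
      rw [hi'.2, hj'.2] at this
      exact this rfl
    have : 0 < indCount a z ω := by
      rw [indCount, Finset.card_pos]
      exact ⟨A, Finset.mem_filter.2 ⟨mem_univ _, hAind⟩⟩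
    omega
open Finset

theorem erdosGraph (g k : ℕ) : ∃ N, 0 < N ∧ ∃ H : SimpleGraph (Fin N),
    (∀ L c, 3 ≤ L → L ≤ g → ¬ IsTupCyc H.Adj L c) ∧ ¬ H.Colorable k := by
  set g' := max g 3 with hg'
  set k' := max k 1 with hk'
  have hg3 : 3 ≤ g' := le_max_right g 3
  have hk1 : 1 ≤ k' := le_max_right k 1
  have ha : 2*k'*(4*g'*64^g'*k'^(2*g'-1)) = (8*g'*(64*k'^2)^(g'-1))*(64*k'^2) := by
    have e1 : k' ^ (2*g'-1) * k' = k' ^ (2*g') := by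
      rw [← pow_succ]; congr 1; omega
    have e2 : (64*k'^2)^(g'-1) * (64*k'^2) = (64*k'^2)^g' := by
      rw [← pow_succ]; congr 1; omega
    have e3 : (64*k'^2 : ℕ)^g' = 64^g' * k'^(2*g') := by
      rw [mul_pow, pow_mul]
    calc 2*k'*(4*g'*64^g'*k'^(2*g'-1)) = 8*g'*64^g'*(k'^(2*g'-1)*k') := by ring
      _ = 8*g'*64^g'*k'^(2*g') := by rw [e1]
      _ = 8*g'*(64^g'*k'^(2*g')) := by ring
      _ = 8*g'*(64*k'^2)^g' := by rw [← e3]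
      _ = 8*g'*((64*k'^2)^(g'-1)*(64*k'^2)) := by rw [e2]
      _ = (8*g'*(64*k'^2)^(g'-1))*(64*k'^2) := by ring
  obtain ⟨H, h1, h2⟩ := erdos_main g' k' (64*k'^2) (8*g'*(64*k'^2)^(g'-1))
    ((8*g'*(64*k'^2)^(g'-1))*(64*k'^2)) (4*g'*64^g'*k'^(2*g'-1)) hg3 hk1 rfl rfl rfl ha
  refine ⟨_, ?_, H, ?_, ?_⟩
  · have p1 : 0 < (64*k'^2 : ℕ) := by positivity
    have p2 : 0 < (64*k'^2 : ℕ)^(g'-1) := pow_pos p1 _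
    have p3 : 0 < g' := by omega
    positivity
  · intro L c hL3 hLg
    exact h1 L c hL3 (le_trans hLg (le_max_left g 3))
  · intro hcol
    exact h2 (hcol.mono (le_max_left k 1))

/-- Number of vertices of the Erdős graph with girth `> n` and chromatic number `> k`. -/
noncomputable def famN (n k : ℕ) : ℕ := (erdosGraph n k).choose

lemma famN_pos (n k : ℕ) : 0 < famN n k := (erdosGraph n k).choose_spec.1

/-- The Erdős graph with girth `> n` and chromatic number `> k`. -/
noncomputable def famH (n k : ℕ) : SimpleGraph (Fin (famN n k)) :=
  (erdosGraph n k).choose_spec.2.choose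

lemma famH_girth (n k : ℕ) : ∀ L c, 3 ≤ L → L ≤ n → ¬ IsTupCyc (famH n k).Adj L c :=
  (erdosGraph n k).choose_spec.2.choose_spec.1

lemma famH_chrom (n k : ℕ) : ¬ (famH n k).Colorable k :=
  (erdosGraph n k).choose_spec.2.choose_spec.2

lemma famH_adj_cast {n k k' : ℕ} (h : k = k') {x y : Fin (famN n k)}
    (hadj : (famH n k).Adj x y) :
    (famH n k').Adj ⟨x.val, h ▸ x.isLt⟩ ⟨y.val, h ▸ y.isLt⟩ := by
  subst h; exact hadj

/-- The `n`-th graph of the family: disjoint union over `k` of the Erdős graphs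
with girth `> n` and chromatic number `> k`, with extra isolated vertices. -/
noncomputable def famG (n : ℕ) : SimpleGraph (ℕ × ℕ) where
  Adj p q := p.1 = q.1 ∧ ∃ hi : p.2 < famN n p.1, ∃ hj : q.2 < famN n p.1,
    (famH n p.1).Adj ⟨p.2, hi⟩ ⟨q.2, hj⟩
  symm := by
    constructor
    rintro ⟨p1, p2⟩ ⟨q1, q2⟩ ⟨rfl, hi, hj, hadj⟩
    exact ⟨rfl, hj, hi, hadj.symm⟩
  loopless := by
    constructor
    rintro ⟨p1, p2⟩ ⟨-, hi, hj, hadj⟩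
    exact (famH n p1).loopless.irrefl _ hadj

lemma famG_chrom (n : ℕ) : ∀ m : ℕ, ¬ (famG n).Colorable m := by
  rintro m ⟨C⟩
  apply famH_chrom n m
  refine ⟨SimpleGraph.Coloring.mk (fun v => C (m, v.val)) ?_⟩
  intro v w hadj hC
  have : (famG n).Adj (m, v.val) (m, w.val) := ⟨rfl, v.isLt, w.isLt, hadj⟩
  exact (C.valid this) hC

lemma famG_girth (n : ℕ) : ∀ L c, 3 ≤ L → L ≤ n → ¬ IsTupCyc (famG n).Adj L c := by
  rintro L c hL3 hLn ⟨hinj, hadj, hwrap⟩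
  set k0 := (c 0).1 with hk0
  have hcomp : ∀ i, i < L → (c i).1 = k0 := by
    intro i
    induction i with
    | zero => intro _; rfl
    | succ m ih =>
      intro hm
      have h1 : m < L := by omega
      rcases Nat.lt_or_ge (m + 1) L with h | h
      · exact ((hadj m h).1).symm.trans (ih h1)
      · omega
  have hbnd : ∀ i, i < L → (c i).2 < famN n k0 := by
    intro i hi
    rcases Nat.lt_or_ge (i + 1) L with h | h
    · obtain ⟨heq, hlt, -, -⟩ := hadj i h
      rwa [hcomp i hi] at hlt
    · have hiL : i = L - 1 := by omega
      obtain ⟨heq, hlt, -, -⟩ := hwrap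
      rw [hiL]
      rwa [hcomp (L-1) (by omega)] at hlt
  set c' : ℕ → Fin (famN n k0) := fun i =>
    if h : (c i).2 < famN n k0 then ⟨(c i).2, h⟩ else ⟨0, famN_pos n k0⟩ with hc'
  have hval : ∀ i, i < L → (c' i).val = (c i).2 := by
    intro i hi
    rw [hc']; simp only []
    rw [dif_pos (hbnd i hi)]
  have hadj' : ∀ i j, i < L → j < L → (famG n).Adj (c i) (c j) →
      (famH n k0).Adj (c' i) (c' j) := by
    intro i j hi hj h
    obtain ⟨heq, h1, h2, hA⟩ := h
    have e1 : (c i).1 = k0 := hcomp i hi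
    have hA' := famH_adj_cast e1 hA
    have e2 : c' i = ⟨(c i).2, e1 ▸ h1⟩ := Fin.ext (hval i hi)
    have e3 : c' j = ⟨(c j).2, e1 ▸ (heq ▸ h2 : (c j).2 < famN n (c i).1)⟩ :=
      Fin.ext (hval j hj)
    rw [e2, e3]
    exact hA'
  apply famH_girth n k0 L c' hL3 hLn
  refine ⟨?_, ?_, ?_⟩
  · intro i hi j hj hij
    have e := congrArg Fin.val hij
    rw [hval i hi, hval j hj] at e
    apply hinj hi hj
    have : c i = c j := Prod.ext ((hcomp i hi).trans (hcomp j hj).symm) e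
    exact this
  · intro i hi
    exact hadj' i (i+1) (by omega) hi (hadj i hi)
  · exact hadj' (L-1) 0 (by omega) (by omega) hwrap
open SimpleGraph

lemma getVert_eq_support_getElem {V : Type*} {G : SimpleGraph V} {u v : V}
    (p : G.Walk u v) (i : ℕ) (h : i < p.support.length) :
    p.support[i] = p.getVert i := by
  induction p generalizing i with
  | nil =>
    simp only [Walk.support_nil, List.length_singleton] at h
    interval_cases i
    simp [Walk.getVert]
  | cons h' q ih =>
    cases i with
    | zero => simp [Walk.support_cons, Walk.getVert_zero]
    | succ m =>
      have hlt : m < q.support.length := by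
        simpa [Walk.support_cons] using h
      have e1 : (Walk.cons h' q).support[m+1]'h = q.support[m]'hlt := by
        simp [Walk.support_cons]
      rw [e1, Walk.getVert_cons_succ]
      exact ih m hlt

lemma cycle_getVert_injOn {V : Type*} {G : SimpleGraph V} {v : V} {p : G.Walk v v}
    (hp : p.IsCycle) : ∀ i, i < p.length → ∀ j, j < p.length →
      p.getVert i = p.getVert j → i = j := by
  have hlen : p.support.length = p.length + 1 := p.length_support
  have htlen : p.support.tail.length = p.length := by
    rw [List.length_tail, hlen]; omega
  have htail : p.support.tail.Nodup := hp.support_nodup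
  have key : ∀ m (_hm1 : 0 < m) (_hm2 : m ≤ p.length) (hb : m - 1 < p.support.tail.length),
      p.support.tail[m-1]'hb = p.getVert m := by
    intro m hm hmL hb
    rw [List.getElem_tail]
    have e : m - 1 + 1 = m := by omega
    simp_rw [e]
    exact getVert_eq_support_getElem p m (by omega)
  have key0 : ∀ m, 0 < m → m ≤ p.length → p.getVert m = v → m = p.length := by
    intro m hm hmL hv
    have h1 : p.support.tail[m-1]'(by omega) = v := by
      rw [key m hm hmL (by omega)]; exact hv
    have h2 : p.support.tail[p.length-1]'(by omega) = v := by
      rw [key p.length (by have := hp.three_le_length; omega) le_rfl (by omega)]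
      exact p.getVert_length
    have := (htail.getElem_inj_iff).1 (h1.trans h2.symm)
    have h3 := hp.three_le_length
    omega
  intro i hi j hj he
  rcases Nat.eq_zero_or_pos i with rfl | hi0
  · rcases Nat.eq_zero_or_pos j with rfl | hj0
    · rfl
    · rw [p.getVert_zero] at he
      have := key0 j hj0 (le_of_lt hj) he.symm
      omega
  · rcases Nat.eq_zero_or_pos j with rfl | hj0
    · rw [p.getVert_zero] at he
      have := key0 i hi0 (le_of_lt hi) he
      omega
    · have h1 := key i hi0 (le_of_lt hi)
      have h2 := key j hj0 (le_of_lt hj)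
      have : p.support.tail[i-1]'(by omega) = p.support.tail[j-1]'(by omega) := by
        rw [h1, h2]; exact he
      have := (htail.getElem_inj_iff).1 this
      omega

lemma acyclic_colorable_two {V : Type*} {G : SimpleGraph V} (h : G.IsAcyclic) :
    G.Colorable 2 := by
  classical
  set r : V → V := fun v => (G.connectedComponentMk v).out with hr
  have hreach : ∀ v, G.Reachable (r v) v := by
    intro v
    rw [← ConnectedComponent.eq (G := G) (v := r v) (w := v)] at *
    · exact Quot.out_eq _
  have pth : ∀ v, G.Path (r v) v := fun v => ((hreach v).some).toPath
  refine ⟨SimpleGraph.Coloring.mk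
    (fun v => ⟨(pth v).val.length % 2, Nat.mod_lt _ (by omega)⟩) ?_⟩
  intro x y hxy hC
  have hrxy : r x = r y := by
    rw [hr]
    simp only []
    congr 1
    exact ConnectedComponent.eq.2 hxy.reachable
  have key : (pth y).val.length = (pth x).val.length + 1 ∨
      (pth x).val.length = (pth y).val.length + 1 := by
    by_cases hmem : y ∈ (pth x).val.support
    · right
      set tk := (pth x).val.takeUntil y hmem with htkdef
      set dr := (pth x).val.dropUntil y hmem with hdrdef
      have hsplit : tk.append dr = (pth x).val := Walk.take_spec _ hmem
      have htk : tk.IsPath := (pth x).prop.takeUntil hmem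
      have hdr : dr.IsPath := (pth x).prop.dropUntil hmem
      have hsingle : (Walk.cons hxy.symm Walk.nil : G.Walk y x).IsPath := by
        rw [Walk.isPath_def]
        simp [hxy.ne']
      have hdr1 : dr.length = 1 := by
        have he := h.path_unique (⟨dr, hdr⟩ : G.Path y x) ⟨Walk.cons hxy.symm Walk.nil, hsingle⟩
        have := congrArg (fun q : G.Path y x => q.val.length) he
        simpa using this
      have htk' : (tk.copy hrxy rfl).IsPath := by rwa [Walk.isPath_copy]
      have hpy : (pth y) = ⟨tk.copy hrxy rfl, htk'⟩ := h.path_unique _ _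
      have hlen1 : (pth y).val.length = tk.length := by
        rw [hpy]; simp [Walk.length_copy]
      have hlen2 : tk.length + dr.length = (pth x).val.length := by
        rw [← hsplit, Walk.length_append]
      omega
    · left
      set ext := (pth x).val.concat hxy with hextdef
      have hext : ext.IsPath := by
        rw [Walk.isPath_def, hextdef, Walk.concat_eq_append, Walk.support_append]
        simp only [Walk.support_cons, Walk.support_nil, List.tail_cons]
        rw [List.nodup_append]
        refine ⟨(pth x).prop.support_nodup, List.nodup_singleton _, ?_⟩
        intro a ha b hb
        simp only [List.mem_singleton] at hb
        subst hb
        rintro rfl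
        exact hmem ha
      have hext' : (ext.copy hrxy rfl).IsPath := by rwa [Walk.isPath_copy]
      have hpy : (pth y) = ⟨ext.copy hrxy rfl, hext'⟩ := h.path_unique _ _
      have : (pth y).val.length = ext.length := by rw [hpy]; simp [Walk.length_copy]
      rw [this, hextdef, Walk.length_concat]
  have hCv := congrArg Fin.val hC
  simp only [] at hCv
  omega
open SimpleGraph

lemma up_acyclic (u : Ultrafilter ℕ) (hu : ∀ s : Set ℕ, sᶜ.Finite → s ∈ u)
    (V : ℕ → Type) (G : ∀ n, SimpleGraph (V n))
    (hG : ∀ n L c, 3 ≤ L → L ≤ n → ¬ IsTupCyc (G n).Adj L c) :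
    (upGraph u V G).IsAcyclic := by
  intro v w hw
  set L := w.length with hL
  have hL3 : 3 ≤ L := hw.three_le_length
  set f : ℕ → ∀ n, V n := fun i => (w.getVert i).out with hfdef
  have hf : ∀ i, (⟦f i⟧ : Quotient (upSetoid u V)) = w.getVert i :=
    fun i => Quotient.out_eq _
  have hadj : ∀ i, i < L → {n | (G n).Adj (f i n) (f (i+1) n)} ∈ u := by
    intro i hi
    have h : (upGraph u V G).Adj (w.getVert i) (w.getVert (i+1)) :=
      w.adj_getVert_succ hi
    rw [← hf i, ← hf (i+1)] at h
    exact h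
  have hgv := cycle_getVert_injOn hw
  have hne : ∀ i j, i < L → j < L → i ≠ j → {n | f i n ≠ f j n} ∈ u := by
    intro i j hi hj hij
    have hne' : (⟦f i⟧ : Quotient (upSetoid u V)) ≠ ⟦f j⟧ := by
      rw [hf i, hf j]
      exact fun he => hij (hgv i hi j hj he)
    have hnm : ¬ ({n | f i n = f j n} ∈ u) := fun hm => hne' (Quotient.sound hm)
    exact Ultrafilter.compl_mem_iff_notMem.2 hnm
  have hwrapeq : {n | f L n = f 0 n} ∈ u := by
    have he : (⟦f L⟧ : Quotient (upSetoid u V)) = ⟦f 0⟧ := by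
      rw [hf L, hf 0, hL]
      rw [w.getVert_length, w.getVert_zero]
    exact Quotient.exact he
  have hbig : ∀ᶠ n in (u : Filter ℕ), L ≤ n ∧
      (∀ i : Fin L, (G n).Adj (f i.val n) (f (i.val+1) n)) ∧ (f L n = f 0 n) ∧
      (∀ p : Fin L × Fin L, p.1 ≠ p.2 → f p.1.val n ≠ f p.2.val n) := by
    refine Filter.Eventually.and ?_ (Filter.Eventually.and ?_ (Filter.Eventually.and ?_ ?_))
    · have hmem : {n | L ≤ n} ∈ u := by
        apply hu
        apply (Set.finite_Iio L).subset
        intro x hx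
        simpa using hx
      exact hmem
    · rw [Filter.eventually_all]
      intro i
      exact hadj i.val i.isLt
    · exact hwrapeq
    · rw [Filter.eventually_all]
      intro p
      rcases eq_or_ne p.1 p.2 with h | h
      · exact Filter.Eventually.of_forall (fun n hp => (hp h).elim)
      · have hm := hne p.1.val p.2.val p.1.isLt p.2.isLt
          (fun hv => h (Fin.ext hv))
        exact Filter.Eventually.mono hm (fun n hn _ => hn)
  obtain ⟨n, hn1, hn2, hn3, hn4⟩ := hbig.exists
  apply hG n L (fun i => f i n) hL3 hn1
  refine ⟨?_, ?_, ?_⟩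
  · intro i hi j hj he
    by_contra hij
    exact hn4 (⟨i, hi⟩, ⟨j, hj⟩) (fun hc => hij (congrArg Fin.val hc)) he
  · intro i hi
    exact hn2 ⟨i, by omega⟩
  · have h := hn2 ⟨L-1, by omega⟩
    simp only [] at h
    rw [show L - 1 + 1 = L by omega] at h
    rwa [hn3] at h

/-- there is a family of simple graphs, each of infinite chromatic number,
whose ultraproduct over any nonprincipal ultrafilter on ℕ is acyclic, hence 2-colourable. -/
theorem exists_infinite_chromatic_family_with_acyclic_ultraproduct :
    ∃ (V : ℕ → Type) (G : ∀ n, SimpleGraph (V n)),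
      (∀ n : ℕ, ∀ m : ℕ, ¬ (G n).Colorable m) ∧
      (∀ u : Ultrafilter ℕ, (∀ s : Set ℕ, sᶜ.Finite → s ∈ u) →
        (upGraph u V G).IsAcyclic ∧ (upGraph u V G).Colorable 2) := by
  refine ⟨fun _ => ℕ × ℕ, famG, fun n m => famG_chrom n m, ?_⟩
  intro u hu
  have hac : (upGraph u (fun _ => ℕ × ℕ) famG).IsAcyclic :=
    up_acyclic u hu _ famG (fun n L c h1 h2 => famG_girth n L c h1 h2)
  exact ⟨hac, acyclic_colorable_two hac⟩
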